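/- (Global convergence of the predictor–corrector DC-Solver, Theorem: applying dynamic compensation to a predictor–corrector sampler of (p+1)-th order of convergence maintains the (p+1)-th order of convergence.) Let V be a real normed vector space; fix integers p ≥ 2, K ≥ p−1, M > K and constants L, C₂, C₄, C₆, C₈, C_gt, C_gt′, C_w, C_w′ ≥ 0 and C₃, C₇ > 0. Then there exist constants h₀ > 0 and Γ, Γ′, Γ″ ≥ 0, depending only on these data (and not on h), such that for every h with 0 < h ≤ h₀ the following holds: for every family of L-Lipschitz maps f_k : V → V (0 ≤ k ≤ M), every scalars A_i, B_{i,m}, C_i, D_{i,m} (K < i ≤ M, 0 ≤ m ≤ p−1) with |A_i| ≤ C₂, C₃·h ≤ |B_{i,m}| ≤ C₄·h, |C_i| ≤ C₆, C₇·h ≤ |D_{i,m}| ≤ C₈·h, every ground-truth points x_0, …, x_M ∈ V satisfying, for all K < i ≤ M with x̂_i := A_i·x_{i−1} + Σ_{m=1}^{p−1} B_{i,m}·f_{i−m}(x_{i−m}), the bounds ‖x̂_i − x_i‖ ≤ C_gt′·h^(p+1) and ‖C_i·x_{i−1} + Σ_{m=1}^{p−1} D_{i,m}·f_{i−m}(x_{i−m})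 + D_{i,0}·f_i(x̂_i) − x_i‖ ≤ C_gt·h^(p+2), and every sequences x̃_k, x̃ᶜ_k ∈ V (0 ≤ k ≤ M) and β̂_k ∈ V (0 ≤ k ≤ M−1) such that (a) ‖x̃ᶜ_k − x_k‖ ≤ C_w·h^(p+1) and ‖x̃_k − x_k‖ ≤ C_w′·h^p for 0 ≤ k ≤ K, (b) β̂_k = f_k(x̃_k) for 0 ≤ k < K, and (c) for each K < i ≤ M, x̃_i = A_i·x̃ᶜ_{i−1} + Σ_{m=1}^{p−1} B_{i,m}·β̂_{i−m}, x̃ᶜ_i = C_i·x̃ᶜ_{i−1} + Σ_{m=1}^{p−1} D_{i,m}·β̂_{i−m} + D_{i,0}·f_i(x̃_i), and ‖x̃ᶜ_i − x_i‖ ≤ ‖C_i·x̃ᶜ_{i−1} + D_{i,1}·f_{i−1}(x̃_{i−1}) + Σ_{m=2}^{p−1} D_{i,m}·β̂_{i−m} + D_{i,0}·f_i(x̄_i) − x_i‖ where x̄_i := A_i·x̃ᶜ_{i−1} + B_{i,1}·f_{i−1}(x̃_{i−1}) + Σ_{m=2}^{p−1} B_{i,m}·β̂_{i−m}, one has ‖x̃ᶜ_M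 − x_M‖ ≤ Γ·h^(p+1), ‖x̃_M − x_M‖ ≤ Γ′·h^p, and ‖β̂_{M−1} − f_{M−1}(x_{M−1})‖ ≤ Γ″·h^p. -/

import Mathlib

set_option maxHeartbeats 2000000 in
/-- Global convergence of the predictor–corrector DC-Solver: applying dynamic
compensation to a predictor–corrector sampler of `(p+1)`-th order of
convergence maintains the `(p+1)`-th order of convergence. -/
theorem dc_pc_global_convergence {V : Type*} [NormedAddCommGroup V] [NormedSpace ℝ V]
    (p K M : ℕ) (hp : 2 ≤ p) (hK : p - 1 ≤ K) (hM : K < M)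
    (L C₂ C₄ C₆ C₈ Cgt Cgt' Cw Cw' C₃ C₇ : ℝ)
    (hL : 0 ≤ L) (hC₂ : 0 ≤ C₂) (hC₄ : 0 ≤ C₄) (hC₆ : 0 ≤ C₆) (hC₈ : 0 ≤ C₈)
    (hCgt : 0 ≤ Cgt) (hCgt' : 0 ≤ Cgt') (hCw : 0 ≤ Cw) (hCw' : 0 ≤ Cw')
    (hC₃ : 0 < C₃) (hC₇ : 0 < C₇) :
    ∃ (h₀ : ℝ) (Γ Γ' Γ'' : ℝ), 0 < h₀ ∧ 0 ≤ Γ ∧ 0 ≤ Γ' ∧ 0 ≤ Γ'' ∧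
      ∀ (h : ℝ), 0 < h → h ≤ h₀ →
      ∀ (f : ℕ → V → V),
        (∀ k, k ≤ M → ∀ u v : V, ‖f k u - f k v‖ ≤ L * ‖u - v‖) →
      ∀ (A C : ℕ → ℝ) (B D : ℕ → ℕ → ℝ),
        (∀ i, K < i → i ≤ M → |A i| ≤ C₂) →
        (∀ i, K < i → i ≤ M → ∀ m, 1 ≤ m → m ≤ p - 1 →
          C₃ * h ≤ |B i m| ∧ |B i m| ≤ C₄ * h) →
        (∀ i, K < i → i ≤ M → |C i| ≤ C₆) →
        (∀ i, K < i → i ≤ M → ∀ m, m ≤ p - 1 →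
          C₇ * h ≤ |D i m| ∧ |D i m| ≤ C₈ * h) →
      ∀ (x : ℕ → V) (xhat : ℕ → V),
        (∀ i, K < i → i ≤ M →
          xhat i = A i • x (i - 1) + ∑ m ∈ Finset.Icc 1 (p - 1), B i m • f (i - m) (x (i - m))) →
        (∀ i, K < i → i ≤ M → ‖xhat i - x i‖ ≤ Cgt' * h ^ (p + 1)) →
        (∀ i, K < i → i ≤ M →
          ‖C i • x (i - 1) + (∑ m ∈ Finset.Icc 1 (p - 1), D i m • f (i - m) (x (i - m)))
            + D i 0 • f i (xhat i) - x i‖ ≤ Cgt * h ^ (p + 2)) →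
      ∀ (xt xtc βhat : ℕ → V),
        -- (a) warm-up accuracy
        (∀ k, k ≤ K → ‖xtc k - x k‖ ≤ Cw * h ^ (p + 1)) →
        (∀ k, k ≤ K → ‖xt k - x k‖ ≤ Cw' * h ^ p) →
        -- (b) warm-up outputs without compensation
        (∀ k, k < K → βhat k = f k (xt k)) →
        -- (c) DC-Solver updates with the optimality relation
        (∀ i, K < i → i ≤ M →
          xt i = A i • xtc (i - 1) + ∑ m ∈ Finset.Icc 1 (p - 1), B i m • βhat (i - m)) →
        (∀ i, K < i → i ≤ M →
          xtc i = C i • xtc (i - 1) + (∑ m ∈ Finset.Icc 1 (p - 1), D i m • βhat (i - m))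
            + D i 0 • f i (xt i)) →
        (∀ i, K < i → i ≤ M →
          ‖xtc i - x i‖ ≤
            ‖C i • xtc (i - 1) + D i 1 • f (i - 1) (xt (i - 1))
              + (∑ m ∈ Finset.Icc 2 (p - 1), D i m • βhat (i - m))
              + D i 0 • f i (A i • xtc (i - 1) + B i 1 • f (i - 1) (xt (i - 1))
                + ∑ m ∈ Finset.Icc 2 (p - 1), B i m • βhat (i - m)) - x i‖) →
      ‖xtc M - x M‖ ≤ Γ * h ^ (p + 1) ∧
      ‖xt M - x M‖ ≤ Γ' * h ^ p ∧
      ‖βhat (M - 1) - f (M - 1) (x (M - 1))‖ ≤ Γ'' * h ^ p := by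
  have hp1 : (1:ℕ) ≤ p - 1 := by omega
  -- basic nonnegativity facts
  have t1 : (0:ℝ) ≤ C₈*L := mul_nonneg hC₈ hL
  have t2 : (0:ℝ) ≤ (p:ℝ) := Nat.cast_nonneg p
  have t3 : (0:ℝ) ≤ (p:ℝ)*C₈ := mul_nonneg t2 hC₈
  have t4 : (0:ℝ) ≤ C₄*L := mul_nonneg hC₄ hL
  have t5 : (0:ℝ) ≤ (p:ℝ)*C₄ := mul_nonneg t2 hC₄
  have t6 : (0:ℝ) ≤ C₂ + C₄*L + (p:ℝ)*C₄ := by linarith only [t4, t5, hC₂]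
  have t7 : (0:ℝ) ≤ C₈*L*(C₂ + C₄*L + (p:ℝ)*C₄) := mul_nonneg t1 t6
  have hden : (0:ℝ) < 2*(C₄*C₈*L)+1 := by
    have : (0:ℝ) ≤ C₄*C₈*L := mul_nonneg (mul_nonneg hC₄ hC₈) hL
    linarith only [this]
  -- the constants
  obtain ⟨K₁, hK₁def⟩ : ∃ y : ℝ, y = Cgt + C₆ + C₈*L + (p:ℝ)*C₈ + C₈*L*(C₂ + C₄*L + (p:ℝ)*C₄) := ⟨_, rfl⟩
  have hK₁0 : 0 ≤ K₁ := by rw [hK₁def]; linarith only [hCgt, hC₆, t1, t3, t7]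
  obtain ⟨Ka, hKadef⟩ : ∃ y : ℝ, y = 4*K₁/C₇ + L := ⟨_, rfl⟩
  have hKa0 : 0 ≤ Ka := by
    have : (0:ℝ) ≤ 4*K₁/C₇ := div_nonneg (by linarith only [hK₁0]) hC₇.le
    rw [hKadef]; linarith only [this, hL]
  obtain ⟨K₂, hK₂def⟩ : ∃ y : ℝ, y = C₂ + (p:ℝ)*C₄*(Ka + 1) + Cgt' := ⟨_, rfl⟩
  have hK₂0 : 0 ≤ K₂ := by
    have : (0:ℝ) ≤ (p:ℝ)*C₄*(Ka+1) := mul_nonneg t5 (by linarith only [hKa0])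
    rw [hK₂def]; linarith only [this, hC₂, hCgt']
  obtain ⟨Q', hQ'def⟩ : ∃ y : ℝ, y = K₁ + Ka + K₂ + 1 := ⟨_, rfl⟩
  have hQ'1 : 1 ≤ Q' := by rw [hQ'def]; linarith only [hK₁0, hKa0, hK₂0]
  have hK₁Q : K₁ ≤ Q' := by rw [hQ'def]; linarith only [hKa0, hK₂0]
  have hKaQ : Ka ≤ Q' := by rw [hQ'def]; linarith only [hK₁0, hK₂0]
  have hK₂Q : K₂ ≤ Q' := by rw [hQ'def]; linarith only [hK₁0, hKa0]
  obtain ⟨Q, hQdef⟩ : ∃ y : ℝ, y = 2*Q' := ⟨_, rfl⟩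
  have hQ1 : 1 ≤ Q := by rw [hQdef]; linarith only [hQ'1]
  obtain ⟨T, hTdef⟩ : ∃ y : ℝ, y = Cw + Cw' + L*Cw' + 1 := ⟨_, rfl⟩
  have hLCw' : 0 ≤ L*Cw' := mul_nonneg hL hCw'
  have hT1 : 1 ≤ T := by rw [hTdef]; linarith only [hCw, hCw', hLCw']
  have hT0 : 0 ≤ T := by linarith only [hT1]
  have hCwT : Cw ≤ T := by rw [hTdef]; linarith only [hCw', hLCw']
  have hCw'T : Cw' ≤ T := by rw [hTdef]; linarith only [hCw, hLCw']
  have hLCw'T : L*Cw' ≤ T := by rw [hTdef]; linarith only [hCw, hCw']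
  have hTQM : 0 ≤ T * Q^M := mul_nonneg hT0 (pow_nonneg (by linarith only [hQ1]) M)
  refine ⟨min 1 (C₇/(2*(C₄*C₈*L)+1)), T*Q^M, T*Q^M, T*Q^M,
    lt_min one_pos (div_pos hC₇ hden), hTQM, hTQM, hTQM, ?_⟩
  intro h hh hh0 f hf A C B D hA hB hC hD x xhat hxhat hpred hcorr xt xtc βhat
    hwc hwp hwb hxt hxtc hopt
  have hh1 : h ≤ 1 := le_trans hh0 (min_le_left _ _)
  have hhC : C₄*C₈*L*h ≤ C₇/2 := by
    have h2 : h ≤ C₇/(2*(C₄*C₈*L)+1) := le_trans hh0 (min_le_right _ _)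
    rw [le_div_iff₀ hden] at h2
    linarith only [h2, hh]
  have hhp : (0:ℝ) < h^p := pow_pos hh p
  have hhp1 : (0:ℝ) < h^(p+1) := pow_pos hh _
  have hins : Finset.Icc 1 (p-1) = insert 1 (Finset.Icc 2 (p-1)) := by
    ext m; simp only [Finset.mem_Icc, Finset.mem_insert]; omega
  have hnm : (1:ℕ) ∉ Finset.Icc 2 (p-1) := by simp
  have hcard : ((Finset.Icc 2 (p-1)).card : ℝ) ≤ (p:ℝ) := by
    rw [Nat.card_Icc]
    exact_mod_cast (by omega : p - 1 + 1 - 2 ≤ p)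
  -- smul bound helper
  have sb : ∀ (c b n : ℝ) (v : V), |c| ≤ b → ‖v‖ ≤ n → ‖c • v‖ ≤ b * n := by
    intro c b n v hb hn
    rw [norm_smul, Real.norm_eq_abs]
    exact mul_le_mul hb hn (norm_nonneg _) (le_trans (abs_nonneg _) hb)
  -- sum bound helper
  have sumb : ∀ (c : ℕ → ℝ) (v : ℕ → V) (b : ℝ), 0 ≤ b →
      (∀ m ∈ Finset.Icc 2 (p-1), ‖c m • v m‖ ≤ b) →
      ‖∑ m ∈ Finset.Icc 2 (p-1), c m • v m‖ ≤ (p:ℝ) * b := by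
    intro c v b hb hbd
    calc ‖∑ m ∈ Finset.Icc 2 (p-1), c m • v m‖
        ≤ ∑ m ∈ Finset.Icc 2 (p-1), ‖c m • v m‖ := norm_sum_le _ _
      _ ≤ ∑ _m ∈ Finset.Icc 2 (p-1), b := Finset.sum_le_sum hbd
      _ = ((Finset.Icc 2 (p-1)).card : ℝ) * b := by rw [Finset.sum_const, nsmul_eq_mul]
      _ ≤ (p:ℝ) * b := mul_le_mul_of_nonneg_right hcard hb
  have tri3 : ∀ a b c : V, ‖a + b + c‖ ≤ ‖a‖ + ‖b‖ + ‖c‖ := fun a b c =>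
    le_trans (norm_add_le _ _) (add_le_add_left (norm_add_le _ _) _)
  have tri4 : ∀ a b c d : V, ‖a + b + c + d‖ ≤ ‖a‖ + ‖b‖ + ‖c‖ + ‖d‖ := fun a b c d =>
    le_trans (norm_add_le _ _) (add_le_add_left (tri3 a b c) _)
  -- the main invariant
  have main : ∀ i, i ≤ M →
      ‖xtc i - x i‖ ≤ T*Q^i*h^(p+1) ∧ ‖xt i - x i‖ ≤ T*Q^i*h^p ∧
      ‖βhat (i-1) - f (i-1) (x (i-1))‖ ≤ T*Q^i*h^p := by
    intro i
    induction i using Nat.strong_induction_on with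
    | _ i ih =>
    intro hiM
    have hQi1 : (1:ℝ) ≤ Q^i := one_le_pow₀ hQ1
    have step0 : ∀ (a e : ℝ), 0 ≤ e → 0 ≤ a → a ≤ T → a * e ≤ T*Q^i*e := by
      intro a e he ha haT
      have h2 : T * 1 ≤ T * Q^i := mul_le_mul_of_nonneg_left hQi1 hT0
      have h3 : a ≤ T*Q^i := by linarith only [h2, haT]
      exact mul_le_mul_of_nonneg_right h3 he
    by_cases hcase : i ≤ K
    · -- warm-up range
      refine ⟨le_trans (hwc i hcase) (step0 _ _ hhp1.le hCw hCwT),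
              le_trans (hwp i hcase) (step0 _ _ hhp.le hCw' hCw'T), ?_⟩
      have hi1K : i - 1 < K := by omega
      have hb3 : ‖βhat (i-1) - f (i-1) (x (i-1))‖ ≤ L*Cw' * h^p := by
        rw [hwb (i-1) hi1K]
        calc ‖f (i-1) (xt (i-1)) - f (i-1) (x (i-1))‖
            ≤ L * ‖xt (i-1) - x (i-1)‖ := hf (i-1) (by omega) _ _
          _ ≤ L * (Cw' * h^p) := mul_le_mul_of_nonneg_left (hwp (i-1) (by omega)) hL
          _ = L*Cw' * h^p := by ring
      exact le_trans hb3 (step0 _ _ hhp.le (mul_nonneg hL hCw') hLCw'T)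
    · push_neg at hcase
      have hKi : K < i := hcase
      have hi1 : i - 1 < i := by omega
      have hi1M : i - 1 ≤ M := by omega
      obtain ⟨he, ht, -⟩ := ih (i-1) hi1 hi1M
      obtain ⟨P, hPdef⟩ : ∃ y : ℝ, y = T * Q^(i-1) := ⟨_, rfl⟩
      rw [← hPdef] at he ht
      have hu1 : (1:ℝ) ≤ Q^(i-1) := one_le_pow₀ hQ1
      have hP1 : (1:ℝ) ≤ P := by
        have h11 : (1:ℝ)*1 ≤ T*Q^(i-1) := mul_le_mul hT1 hu1 zero_le_one hT0
        rw [hPdef]; linarith only [h11]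
      have hP0 : (0:ℝ) ≤ P := by linarith only [hP1]
      -- bounds on previous compensated outputs
      have hγ : ∀ m ∈ Finset.Icc 2 (p-1), ‖βhat (i-m) - f (i-m) (x (i-m))‖ ≤ P * h^p := by
        intro m hm
        rw [Finset.mem_Icc] at hm
        have him : i - m + 1 < i := by omega
        obtain ⟨-, -, hg⟩ := ih (i-m+1) him (by omega)
        have him2 : i - m + 1 - 1 = i - m := by omega
        rw [him2] at hg
        have hpow : Q^(i-m+1) ≤ Q^(i-1) := pow_le_pow_right₀ hQ1 (by omega)
        calc ‖βhat (i-m) - f (i-m) (x (i-m))‖ ≤ T*Q^(i-m+1)*h^p := hg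
          _ ≤ P * h^p := by
              refine mul_le_mul_of_nonneg_right ?_ hhp.le
              rw [hPdef]
              exact mul_le_mul_of_nonneg_left hpow hT0
      -- instantiate the hypotheses at step i
      have hopt' := hopt i hKi hiM
      have hxt' := hxt i hKi hiM
      have hxtc' := hxtc i hKi hiM
      have hxhat' := hxhat i hKi hiM
      have hpred' := hpred i hKi hiM
      have hcorr' := hcorr i hKi hiM
      obtain ⟨δ, hδdef⟩ : ∃ v : V, v = βhat (i-1) - f (i-1) (xt (i-1)) := ⟨_, rfl⟩
      obtain ⟨ybar, hybar⟩ : ∃ v : V, v = A i • xtc (i - 1) + B i 1 • f (i - 1) (xt (i - 1))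
        + ∑ m ∈ Finset.Icc 2 (p - 1), B i m • βhat (i - m) := ⟨_, rfl⟩
      rw [← hybar] at hopt'
      obtain ⟨z, hz⟩ : ∃ v : V, v = C i • xtc (i - 1) + D i 1 • f (i - 1) (xt (i - 1))
        + (∑ m ∈ Finset.Icc 2 (p - 1), D i m • βhat (i - m)) + D i 0 • f i ybar := ⟨_, rfl⟩
      rw [← hz] at hopt'
      obtain ⟨g, hg⟩ : ∃ v : V, v = C i • x (i - 1)
        + (∑ m ∈ Finset.Icc 1 (p - 1), D i m • f (i - m) (x (i - m)))
        + D i 0 • f i (xhat i) := ⟨_, rfl⟩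
      rw [← hg] at hcorr'
      -- coefficient bounds
      have hAi := hA i hKi hiM
      have hB1 := (hB i hKi hiM 1 le_rfl hp1).2
      have hCi := hC i hKi hiM
      have hD1l := (hD i hKi hiM 1 hp1).1
      have hD1 := (hD i hKi hiM 1 hp1).2
      have hD0 := (hD i hKi hiM 0 (Nat.zero_le _)).2
      -- sum splittings
      have hsB : ∑ m ∈ Finset.Icc 1 (p-1), B i m • f (i-m) (x (i-m))
          = B i 1 • f (i-1) (x (i-1)) + ∑ m ∈ Finset.Icc 2 (p-1), B i m • f (i-m) (x (i-m)) := by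
        rw [hins, Finset.sum_insert hnm]
      have hsB2 : ∑ m ∈ Finset.Icc 1 (p-1), B i m • βhat (i-m)
          = B i 1 • βhat (i-1) + ∑ m ∈ Finset.Icc 2 (p-1), B i m • βhat (i-m) := by
        rw [hins, Finset.sum_insert hnm]
      have hsD : ∑ m ∈ Finset.Icc 1 (p-1), D i m • f (i-m) (x (i-m))
          = D i 1 • f (i-1) (x (i-1)) + ∑ m ∈ Finset.Icc 2 (p-1), D i m • f (i-m) (x (i-m)) := by
        rw [hins, Finset.sum_insert hnm]
      have hsD2 : ∑ m ∈ Finset.Icc 1 (p-1), D i m • βhat (i-m)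
          = D i 1 • βhat (i-1) + ∑ m ∈ Finset.Icc 2 (p-1), D i m • βhat (i-m) := by
        rw [hins, Finset.sum_insert hnm]
      -- algebraic identities
      have hy : ybar - xhat i = A i • (xtc (i-1) - x (i-1))
          + B i 1 • (f (i-1) (xt (i-1)) - f (i-1) (x (i-1)))
          + ∑ m ∈ Finset.Icc 2 (p-1), B i m • (βhat (i-m) - f (i-m) (x (i-m))) := by
        rw [hybar, hxhat', hsB]
        simp only [smul_sub, Finset.sum_sub_distrib]
        abel
      have hxtd : xt i - ybar = B i 1 • δ := by
        rw [hxt', hsB2, hybar, hδdef, smul_sub]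
        abel
      have hctd : xtc i - z = D i 1 • δ + D i 0 • (f i (xt i) - f i ybar) := by
        rw [hxtc', hsD2, hz, hδdef]
        simp only [smul_sub]
        abel
      have hzg : z - g = C i • (xtc (i-1) - x (i-1))
          + D i 1 • (f (i-1) (xt (i-1)) - f (i-1) (x (i-1)))
          + (∑ m ∈ Finset.Icc 2 (p-1), D i m • (βhat (i-m) - f (i-m) (x (i-m))))
          + D i 0 • (f i ybar - f i (xhat i)) := by
        rw [hz, hg, hsD]
        simp only [smul_sub, Finset.sum_sub_distrib]
        abel
      have hxtdiff : xt i - xhat i = A i • (xtc (i-1) - x (i-1))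
          + B i 1 • (βhat (i-1) - f (i-1) (x (i-1)))
          + ∑ m ∈ Finset.Icc 2 (p-1), B i m • (βhat (i-m) - f (i-m) (x (i-m))) := by
        rw [hxt', hxhat', hsB2, hsB]
        simp only [smul_sub, Finset.sum_sub_distrib]
        abel
      -- Lipschitz bound on old predictor error
      have hlip1 : ‖f (i-1) (xt (i-1)) - f (i-1) (x (i-1))‖ ≤ L*(P*h^p) :=
        le_trans (hf (i-1) hi1M _ _) (mul_le_mul_of_nonneg_left ht hL)
      -- the B-sum bound
      have hsumB : ‖∑ m ∈ Finset.Icc 2 (p-1), B i m • (βhat (i-m) - f (i-m) (x (i-m)))‖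
          ≤ (p:ℝ) * (C₄*h*(P*h^p)) := by
        refine sumb _ _ _ (mul_nonneg (mul_nonneg hC₄ hh.le) (mul_nonneg hP0 hhp.le)) ?_
        intro m hm
        have hm' := Finset.mem_Icc.mp hm
        exact sb _ _ _ _ (hB i hKi hiM m (by omega) (by omega)).2 (hγ m hm)
      have hsumD : ‖∑ m ∈ Finset.Icc 2 (p-1), D i m • (βhat (i-m) - f (i-m) (x (i-m)))‖
          ≤ (p:ℝ) * (C₈*h*(P*h^p)) := by
        refine sumb _ _ _ (mul_nonneg (mul_nonneg hC₈ hh.le) (mul_nonneg hP0 hhp.le)) ?_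
        intro m hm
        have hm' := Finset.mem_Icc.mp hm
        exact sb _ _ _ _ (hD i hKi hiM m (by omega)).2 (hγ m hm)
      have hps : h^(p+1) = h^p * h := pow_succ h p
      -- predictor-comparison bound
      have hybnd : ‖ybar - xhat i‖ ≤ (C₂ + C₄*L + (p:ℝ)*C₄) * (P * h^(p+1)) := by
        calc ‖ybar - xhat i‖
            ≤ ‖A i • (xtc (i-1) - x (i-1))‖
              + ‖B i 1 • (f (i-1) (xt (i-1)) - f (i-1) (x (i-1)))‖
              + ‖∑ m ∈ Finset.Icc 2 (p-1), B i m • (βhat (i-m) - f (i-m) (x (i-m)))‖ := by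
                rw [hy]; exact tri3 _ _ _
          _ ≤ C₂*(P*h^(p+1)) + (C₄*h)*(L*(P*h^p)) + (p:ℝ)*(C₄*h*(P*h^p)) := by
                exact add_le_add (add_le_add (sb _ _ _ _ hAi he)
                  (sb _ _ _ _ hB1 hlip1)) hsumB
          _ = (C₂ + C₄*L + (p:ℝ)*C₄) * (P * h^(p+1)) := by rw [hps]; ring
      -- the corrector-comparison bound
      have hcoef : C₆*P + C₈*L*P + (p:ℝ)*C₈*P + C₈*L*(C₂+C₄*L+(p:ℝ)*C₄)*P*h + Cgt*h
          ≤ K₁*(P+1) := by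
        have hq1 : 0 ≤ Cgt*(P+1-h) := mul_nonneg hCgt (by linarith only [hP0, hh1])
        have hq2 : 0 ≤ C₈*L*(C₂+C₄*L+(p:ℝ)*C₄)*(P*(1-h)+1) := by
          refine mul_nonneg t7 ?_
          have : (0:ℝ) ≤ P*(1-h) := mul_nonneg hP0 (by linarith only [hh1])
          linarith only [this]
        rw [hK₁def]
        linarith only [hq1, hq2, t3, t1, hC₆]
      have hE : ‖z - x i‖ ≤ K₁*((P+1)*h^(p+1)) := by
        calc ‖z - x i‖ = ‖(z - g) + (g - x i)‖ := by rw [sub_add_sub_cancel]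
          _ ≤ ‖z - g‖ + ‖g - x i‖ := norm_add_le _ _
          _ ≤ (C₆*(P*h^(p+1)) + (C₈*h)*(L*(P*h^p)) + (p:ℝ)*(C₈*h*(P*h^p))
              + (C₈*h)*(L*((C₂ + C₄*L + (p:ℝ)*C₄) * (P * h^(p+1))))) + Cgt*h^(p+2) := by
                refine add_le_add ?_ hcorr'
                calc ‖z - g‖ ≤ ‖C i • (xtc (i-1) - x (i-1))‖
                    + ‖D i 1 • (f (i-1) (xt (i-1)) - f (i-1) (x (i-1)))‖
                    + ‖∑ m ∈ Finset.Icc 2 (p-1), D i m • (βhat (i-m) - f (i-m) (x (i-m)))‖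
                    + ‖D i 0 • (f i ybar - f i (xhat i))‖ := by
                      rw [hzg]; exact tri4 _ _ _ _
                  _ ≤ _ :=
                      add_le_add (add_le_add (add_le_add (sb _ _ _ _ hCi he)
                        (sb _ _ _ _ hD1 hlip1)) hsumD)
                        (sb _ _ _ _ hD0
                          (le_trans (hf i hiM _ _) (mul_le_mul_of_nonneg_left hybnd hL)))
          _ = (C₆*P + C₈*L*P + (p:ℝ)*C₈*P + C₈*L*(C₂+C₄*L+(p:ℝ)*C₄)*P*h + Cgt*h)*h^(p+1) := by
                rw [show h^(p+2) = h^(p+1)*h by rw [pow_succ], hps]; ring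
          _ ≤ (K₁*(P+1))*h^(p+1) := mul_le_mul_of_nonneg_right hcoef hhp1.le
          _ = K₁*((P+1)*h^(p+1)) := by ring
      -- recover the compensation error
      have hδn : C₇*h*‖δ‖ ≤ 4*(K₁*((P+1)*h^(p+1))) := by
        have e2 : D i 1 • δ = (xtc i - x i) - (z - x i) - D i 0 • (f i (xt i) - f i ybar) := by
          have : D i 1 • δ = (xtc i - z) - D i 0 • (f i (xt i) - f i ybar) := by
            rw [hctd]; abel
          rw [this]; abel
        have n0 : ‖D i 1 • δ‖ ≤ ‖xtc i - x i‖ + ‖z - x i‖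
            + ‖D i 0 • (f i (xt i) - f i ybar)‖ := by
          rw [e2]
          exact le_trans (norm_sub_le _ _) (add_le_add_left (norm_sub_le _ _) _)
        have n5 : ‖D i 0 • (f i (xt i) - f i ybar)‖ ≤ (C₇/2)*(h*‖δ‖) := by
          have nδ : ‖xt i - ybar‖ ≤ C₄*h*‖δ‖ := by
            rw [hxtd]; exact sb _ _ _ _ hB1 le_rfl
          calc ‖D i 0 • (f i (xt i) - f i ybar)‖ ≤ (C₈*h)*(L*(C₄*h*‖δ‖)) :=
                sb _ _ _ _ hD0 (le_trans (hf i hiM _ _) (mul_le_mul_of_nonneg_left nδ hL))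
            _ = (C₄*C₈*L*h)*(h*‖δ‖) := by ring
            _ ≤ (C₇/2)*(h*‖δ‖) :=
                mul_le_mul_of_nonneg_right hhC (mul_nonneg hh.le (norm_nonneg _))
        have k1 : C₇*h*‖δ‖ ≤ |D i 1| * ‖δ‖ := mul_le_mul_of_nonneg_right hD1l (norm_nonneg _)
        have e1 : ‖D i 1 • δ‖ = |D i 1| * ‖δ‖ := by rw [norm_smul, Real.norm_eq_abs]
        rw [e1] at n0
        linarith only [hopt', hE, k1, n0, n5]
      have hδb : ‖δ‖ ≤ (4*K₁/C₇)*((P+1)*h^p) := by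
        have hC₇h : (0:ℝ) < C₇*h := mul_pos hC₇ hh
        have hC₇ne : C₇ ≠ 0 := ne_of_gt hC₇
        have hhne : h ≠ 0 := ne_of_gt hh
        have heq : (4*K₁/C₇)*((P+1)*h^p) = (4*(K₁*((P+1)*h^(p+1))))/(C₇*h) := by
          rw [hps]; field_simp
        rw [heq, le_div_iff₀ hC₇h]
        calc ‖δ‖*(C₇*h) = C₇*h*‖δ‖ := by ring
          _ ≤ _ := hδn
      -- the new output error
      have hγi : ‖βhat (i-1) - f (i-1) (x (i-1))‖ ≤ Ka*((P+1)*h^p) := by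
        have hid : βhat (i-1) - f (i-1) (x (i-1))
            = δ + (f (i-1) (xt (i-1)) - f (i-1) (x (i-1))) := by rw [hδdef]; abel
        have hPP : L*(P*h^p) ≤ L*((P+1)*h^p) := by
          refine mul_le_mul_of_nonneg_left ?_ hL
          linarith only [hhp.le]
        calc ‖βhat (i-1) - f (i-1) (x (i-1))‖
            ≤ ‖δ‖ + ‖f (i-1) (xt (i-1)) - f (i-1) (x (i-1))‖ := by
              rw [hid]; exact norm_add_le _ _
          _ ≤ (4*K₁/C₇)*((P+1)*h^p) + L*((P+1)*h^p) := add_le_add hδb (le_trans hlip1 hPP)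
          _ = Ka*((P+1)*h^p) := by rw [hKadef]; ring
      -- the geometric step
      have hQs : Q'*(P+1) ≤ T*Q^i := by
        have hii : i - 1 + 1 = i := by omega
        have hQQ : Q^i = Q^(i-1)*(2*Q') := by rw [← hQdef, ← pow_succ, hii]
        have hTu : (1:ℝ)*1 ≤ T*Q^(i-1) := mul_le_mul hT1 hu1 zero_le_one hT0
        have hkey : (0:ℝ) ≤ Q'*(T*Q^(i-1) - 1) :=
          mul_nonneg (by linarith only [hQ'1]) (by linarith only [hTu])
        rw [hQQ, hPdef]
        linarith only [hkey]
      have hQsh1 : ∀ Kc : ℝ, 0 ≤ Kc → Kc ≤ Q' → Kc*((P+1)*h^(p+1)) ≤ T*Q^i*h^(p+1) := by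
        intro Kc h0 hKc
        calc Kc*((P+1)*h^(p+1)) = (Kc*(P+1))*h^(p+1) := by ring
          _ ≤ (T*Q^i)*h^(p+1) := by
              refine mul_le_mul_of_nonneg_right (le_trans ?_ hQs) hhp1.le
              exact mul_le_mul_of_nonneg_right hKc (by linarith only [hP0])
          _ = T*Q^i*h^(p+1) := by ring
      have hQsh2 : ∀ Kc : ℝ, 0 ≤ Kc → Kc ≤ Q' → Kc*((P+1)*h^p) ≤ T*Q^i*h^p := by
        intro Kc h0 hKc
        calc Kc*((P+1)*h^p) = (Kc*(P+1))*h^p := by ring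
          _ ≤ (T*Q^i)*h^p := by
              refine mul_le_mul_of_nonneg_right (le_trans ?_ hQs) hhp.le
              exact mul_le_mul_of_nonneg_right hKc (by linarith only [hP0])
          _ = T*Q^i*h^p := by ring
      refine ⟨?_, ?_, le_trans hγi (hQsh2 _ hKa0 hKaQ)⟩
      · exact le_trans hopt' (le_trans hE (hQsh1 _ hK₁0 hK₁Q))
      · -- predictor error at step i
        have hcoef2 : C₂*P*h + C₄*(Ka*((P+1)))*h + (p:ℝ)*C₄*P*h + Cgt'*h ≤ K₂*(P+1) := by
          have hPh : (0:ℝ) ≤ P+1-P*h := by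
            have : (0:ℝ) ≤ P*(1-h) := mul_nonneg hP0 (by linarith only [hh1])
            linarith only [this]
          have hq1 : 0 ≤ C₂*(P+1-P*h) := mul_nonneg hC₂ hPh
          have hq2 : 0 ≤ Cgt'*(P+1-h) := mul_nonneg hCgt' (by linarith only [hP0, hh1])
          have hq3 : 0 ≤ C₄*Ka*(P+1)*(1-h) :=
            mul_nonneg (mul_nonneg (mul_nonneg hC₄ hKa0) (by linarith only [hP0]))
              (by linarith only [hh1])
          have hq4 : 0 ≤ C₄*((p:ℝ)-1)*Ka*(P+1) := by
            have h5 : (0:ℝ) ≤ (p:ℝ)-1 := by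
              have : (1:ℝ) ≤ (p:ℝ) := by exact_mod_cast (by omega : 1 ≤ p)
              linarith only [this]
            exact mul_nonneg (mul_nonneg (mul_nonneg hC₄ h5) hKa0) (by linarith only [hP0])
          have hq5 : 0 ≤ (p:ℝ)*C₄*(P+1-P*h) := mul_nonneg t5 hPh
          rw [hK₂def]
          linarith only [hq1, hq2, hq3, hq4, hq5]
        have hbd : ‖xt i - x i‖ ≤ (C₂*(P*h^(p+1)) + (C₄*h)*(Ka*((P+1)*h^p))
            + (p:ℝ)*(C₄*h*(P*h^p))) + Cgt'*h^(p+1) := by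
          calc ‖xt i - x i‖ = ‖(xt i - xhat i) + (xhat i - x i)‖ := by rw [sub_add_sub_cancel]
            _ ≤ ‖xt i - xhat i‖ + ‖xhat i - x i‖ := norm_add_le _ _
            _ ≤ _ := by
                refine add_le_add ?_ hpred'
                calc ‖xt i - xhat i‖ ≤ ‖A i • (xtc (i-1) - x (i-1))‖
                    + ‖B i 1 • (βhat (i-1) - f (i-1) (x (i-1)))‖
                    + ‖∑ m ∈ Finset.Icc 2 (p-1), B i m • (βhat (i-m) - f (i-m) (x (i-m)))‖ := by
                      rw [hxtdiff]; exact tri3 _ _ _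
                  _ ≤ _ :=
                      add_le_add (add_le_add (sb _ _ _ _ hAi he)
                        (sb _ _ _ _ hB1 hγi)) hsumB
        calc ‖xt i - x i‖ ≤ (C₂*(P*h^(p+1)) + (C₄*h)*(Ka*((P+1)*h^p))
              + (p:ℝ)*(C₄*h*(P*h^p))) + Cgt'*h^(p+1) := hbd
          _ = (C₂*P*h + C₄*(Ka*((P+1)))*h + (p:ℝ)*C₄*P*h + Cgt'*h)*h^p := by
              rw [hps]; ring
          _ ≤ (K₂*(P+1))*h^p := mul_le_mul_of_nonneg_right hcoef2 hhp.le
          _ = K₂*((P+1)*h^p) := by ring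
          _ ≤ T*Q^i*h^p := hQsh2 _ hK₂0 hK₂Q
  exact main M le_rfl
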